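/- Let r : ℕ → ℝ be a positive sequence decreasing to 0. Define d(x,y) = limsup_{n→∞} |x_n - y_n|^{r_n} for x,y : ℕ → ℂ with d(x,y) < ∞. Then d satisfies the ultrametric inequality: d(x,z) ≤ max(d(x,y), d(y,z)). -/

import Mathlib

open Filter

noncomputable def udist (r : ℕ → ℝ) (x y : ℕ → ℂ) : ENNReal :=
  Filter.limsup (fun n => (‖x n - y n‖₊ : ENNReal) ^ (r n)) Filter.atTop

theorem stmt4 (r : ℕ → ℝ) (hpos : ∀ n, 0 < r n) (hanti : Antitone r)
    (hlim : Tendsto r atTop (nhds 0)) (x y z : ℕ → ℂ) :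
    udist r x z ≤ max (udist r x y) (udist r y z) := by
  set a : ℕ → ENNReal := fun n => (‖x n - y n‖₊ : ENNReal) ^ (r n) with ha
  set b : ℕ → ENNReal := fun n => (‖y n - z n‖₊ : ENNReal) ^ (r n) with hb
  -- pointwise bound
  have hpt : ∀ n, (‖x n - z n‖₊ : ENNReal) ^ (r n) ≤ (2 : ENNReal) ^ (r n) * max (a n) (b n) := by
    intro n
    have h1 : (‖x n - z n‖₊ : ENNReal) ≤ 2 * max (‖x n - y n‖₊ : ENNReal) (‖y n - z n‖₊ : ENNReal) := by
      have : ‖x n - z n‖₊ ≤ ‖x n - y n‖₊ + ‖y n - z n‖₊ := by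
        have := nnnorm_add_le (x n - y n) (y n - z n)
        rwa [sub_add_sub_cancel] at this
      calc (‖x n - z n‖₊ : ENNReal) ≤ (‖x n - y n‖₊ : ENNReal) + (‖y n - z n‖₊ : ENNReal) := by
            exact_mod_cast this
        _ ≤ max (‖x n - y n‖₊ : ENNReal) (‖y n - z n‖₊) + max (‖x n - y n‖₊ : ENNReal) (‖y n - z n‖₊) :=
            add_le_add (le_max_left _ _) (le_max_right _ _)
        _ = 2 * max (‖x n - y n‖₊ : ENNReal) (‖y n - z n‖₊) := (two_mul _).symm
    calc (‖x n - z n‖₊ : ENNReal) ^ (r n)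
        ≤ (2 * max (‖x n - y n‖₊ : ENNReal) (‖y n - z n‖₊)) ^ (r n) :=
          ENNReal.rpow_le_rpow h1 (hpos n).le
      _ = (2 : ENNReal) ^ (r n) * (max (‖x n - y n‖₊ : ENNReal) (‖y n - z n‖₊)) ^ (r n) :=
          ENNReal.mul_rpow_of_nonneg _ _ (hpos n).le
      _ = (2 : ENNReal) ^ (r n) * max (a n) (b n) := by
          congr 1
          exact Monotone.map_max (fun u v huv => ENNReal.rpow_le_rpow huv (hpos n).le)
  -- 2^(r n) tends to 1
  have h2 : Tendsto (fun n => (2 : ENNReal) ^ (r n)) atTop (nhds 1) := by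
    have hR : Tendsto (fun n => (2 : ℝ) ^ (r n)) atTop (nhds 1) := by
      have := (Real.continuousAt_const_rpow (a := 2) (b := 0) two_ne_zero).tendsto.comp hlim
      simpa [Function.comp_def] using this
    have := (ENNReal.continuous_ofReal.tendsto 1).comp hR
    have heq : ∀ n, ENNReal.ofReal ((2:ℝ) ^ r n) = (2 : ENNReal) ^ (r n) := fun n => by
      rw [← ENNReal.ofReal_rpow_of_pos (by norm_num)]; norm_num
    simpa [Function.comp_def, heq] using this
  have hlimsup2 : limsup (fun n => (2 : ENNReal) ^ (r n)) atTop = 1 := h2.limsup_eq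
  calc udist r x z ≤ limsup (fun n => (2 : ENNReal) ^ (r n) * max (a n) (b n)) atTop :=
        limsup_le_limsup (Eventually.of_forall hpt)
    _ ≤ limsup (fun n => (2 : ENNReal) ^ (r n)) atTop * limsup (fun n => max (a n) (b n)) atTop := by
        apply ENNReal.limsup_mul_le'
        · left; rw [hlimsup2]; exact one_ne_zero
        · left; rw [hlimsup2]; exact ENNReal.one_ne_top
    _ = limsup (fun n => max (a n) (b n)) atTop := by rw [hlimsup2, one_mul]
    _ = max (limsup a atTop) (limsup b atTop) := limsup_max
    _ = max (udist r x y) (udist r y z) := rfl
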